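/- Let U, V ⊆ ℂ be nonempty connected open sets and let f : U → V and g : V → U be holomorphic functions that are mutually inverse bijections (g∘f = id_U and f∘g = id_V). Let (R, π, j, F) be a standard Riemann surface (maximal standard analytical continuation) of the holomorphic function element (U, f), and let (S, ρ, ℓ, G) be a standard Riemann surface of the element (V, g), both with values in ℂ. Then F(R) = ρ(S). -/

import Mathlib

open scoped Manifold
open Set

/-- A standard analytical continuation of the holomorphic function element `(U, f)` with
values in `ℂ`. -/
structure StandardContinuation (U : Set ℂ) (f : ℂ → ℂ) where
  S : Type
  [topS : TopologicalSpace S]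
  [chartedS : ChartedSpace ℂ S]
  [analyticS : IsManifold 𝓘(ℂ, ℂ) (⊤ : WithTop ℕ∞) S]
  [t2S : T2Space S]
  [secondCountableS : SecondCountableTopology S]
  [connectedS : ConnectedSpace S]
  p : S → ℂ
  hp : MDifferentiable 𝓘(ℂ, ℂ) 𝓘(ℂ, ℂ) p
  hpnc : ¬ ∃ c : ℂ, ∀ s, p s = c
  hUrange : U ⊆ Set.range p
  j : ℂ → S
  hj : MDifferentiableOn 𝓘(ℂ, ℂ) 𝓘(ℂ, ℂ) j U
  hpj : ∀ z ∈ U, p (j z) = z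
  F : S → ℂ
  hF : MDifferentiable 𝓘(ℂ, ℂ) 𝓘(ℂ, ℂ) F
  hFj : ∀ z ∈ U, F (j z) = f z

attribute [instance] StandardContinuation.topS StandardContinuation.chartedS
  StandardContinuation.analyticS StandardContinuation.t2S
  StandardContinuation.secondCountableS StandardContinuation.connectedS

/-- A standard analytical continuation is a *standard Riemann surface* (is maximal) if
every standard analytical continuation of the same element admits a holomorphic morphism
into it. -/
def StandardContinuation.IsMaximal {U : Set ℂ} {f : ℂ → ℂ}
    (Q : StandardContinuation U f) : Prop :=
  ∀ Q' : StandardContinuation U f,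
    ∃ h : Q'.S → Q.S,
      MDifferentiable 𝓘(ℂ, ℂ) 𝓘(ℂ, ℂ) h ∧ ∀ z ∈ U, h (Q'.j z) = Q.j z


section AuxIdentity
open Filter Topology
variable {M : Type} [TopologicalSpace M] [ChartedSpace ℂ M] [IsManifold 𝓘(ℂ, ℂ) (⊤ : WithTop ℕ∞) M]


/-- The chart, as a map to `ℂ`, sends the punctured neighborhood filter to the punctured
neighborhood filter. -/
lemma aux_tendsto_chart (x : M) :
    Tendsto (chartAt ℂ x) (𝓝[≠] x) (𝓝[≠] (chartAt ℂ x x)) := by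
  set e := chartAt ℂ x with he
  have hsrc : x ∈ e.source := mem_chart_source ℂ x
  rw [tendsto_nhdsWithin_iff]
  constructor
  · exact (e.continuousAt hsrc).continuousWithinAt
  · have h1 : ∀ᶠ y in 𝓝[≠] x, y ∈ e.source :=
      eventually_nhdsWithin_of_eventually_nhds (e.open_source.eventually_mem hsrc)
    have h2 : ∀ᶠ y in 𝓝[≠] x, y ≠ x := eventually_mem_nhdsWithin
    filter_upwards [h1, h2] with y hy hyx
    exact fun hcon => hyx (e.injOn hy hsrc hcon)

lemma aux_tendsto_chart_symm (x : M) :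
    Tendsto (chartAt ℂ x).symm (𝓝[≠] (chartAt ℂ x x)) (𝓝[≠] x) := by
  set e := chartAt ℂ x with he
  have hsrc : x ∈ e.source := mem_chart_source ℂ x
  have htgt : e x ∈ e.target := e.map_source hsrc
  rw [tendsto_nhdsWithin_iff]
  constructor
  · have h0 : Tendsto e.symm (𝓝 (e x)) (𝓝 (e.symm (e x))) :=
      (e.continuousOn_symm.continuousAt (e.open_target.mem_nhds htgt)).tendsto
    rw [e.left_inv hsrc] at h0
    exact h0.mono_left nhdsWithin_le_nhds
  · have h1 : ∀ᶠ z in 𝓝[≠] (e x), z ∈ e.target :=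
      eventually_nhdsWithin_of_eventually_nhds (e.open_target.eventually_mem htgt)
    have h2 : ∀ᶠ z in 𝓝[≠] (e x), z ≠ e x := eventually_mem_nhdsWithin
    filter_upwards [h1, h2] with z hz hzx
    intro hcon
    apply hzx
    rw [← e.right_inv hz, hcon]

lemma aux_neBot (x : M) : (𝓝[≠] x).NeBot := by
  have : (𝓝[≠] (chartAt ℂ x x)).NeBot := inferInstance
  exact (aux_tendsto_chart_symm x).neBot

/-- Local identity theorem: if two holomorphic functions on a complex 1-manifold agree
frequently in a punctured neighborhood of a point, they agree near the point. -/
lemma aux_loc {φ ψ : M → ℂ}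
    (hφ : MDifferentiable 𝓘(ℂ, ℂ) 𝓘(ℂ, ℂ) φ) (hψ : MDifferentiable 𝓘(ℂ, ℂ) 𝓘(ℂ, ℂ) ψ)
    (x : M) (hfr : ∃ᶠ y in 𝓝[≠] x, φ y = ψ y) : φ =ᶠ[𝓝 x] ψ := by
  set e := chartAt ℂ x with he
  have hsrc : x ∈ e.source := mem_chart_source ℂ x
  have htgt : e x ∈ e.target := e.map_source hsrc
  have hdsymm : MDifferentiableOn 𝓘(ℂ, ℂ) 𝓘(ℂ, ℂ) e.symm e.target :=
    (contMDiffOn_chart_symm (n := ⊤)).mdifferentiableOn (by simp)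
  have hdφ : DifferentiableOn ℂ (φ ∘ e.symm) e.target :=
    MDifferentiableOn.differentiableOn
      ((hφ.mdifferentiableOn (s := univ)).comp hdsymm (fun z _ => mem_univ _))
  have hdψ : DifferentiableOn ℂ (ψ ∘ e.symm) e.target :=
    MDifferentiableOn.differentiableOn
      ((hψ.mdifferentiableOn (s := univ)).comp hdsymm (fun z _ => mem_univ _))
  obtain ⟨r, hr, hball⟩ := Metric.isOpen_iff.mp e.open_target (e x) htgt
  have hAφ : AnalyticOnNhd ℂ (φ ∘ e.symm) (Metric.ball (e x) r) :=
    (hdφ.mono hball).analyticOnNhd Metric.isOpen_ball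
  have hAψ : AnalyticOnNhd ℂ (ψ ∘ e.symm) (Metric.ball (e x) r) :=
    (hdψ.mono hball).analyticOnNhd Metric.isOpen_ball
  have hfr' : ∃ᶠ z in 𝓝[≠] (e x), (φ ∘ e.symm) z = (ψ ∘ e.symm) z := by
    apply (aux_tendsto_chart x).frequently
    have h1 : ∀ᶠ y in 𝓝[≠] x, y ∈ e.source :=
      eventually_nhdsWithin_of_eventually_nhds (e.open_source.eventually_mem hsrc)
    refine (hfr.and_eventually h1).mono ?_
    rintro y ⟨hyeq, hysrc⟩
    simp only [Function.comp_apply, ← he, e.left_inv hysrc, hyeq]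
  have heq : EqOn (φ ∘ e.symm) (ψ ∘ e.symm) (Metric.ball (e x) r) :=
    hAφ.eqOn_of_preconnected_of_frequently_eq hAψ
      (convex_ball _ _).isPreconnected (Metric.mem_ball_self hr) hfr'
  have hO : IsOpen (e.source ∩ e ⁻¹' Metric.ball (e x) r) :=
    e.isOpen_inter_preimage Metric.isOpen_ball
  refine eventuallyEq_of_mem (hO.mem_nhds ⟨hsrc, by simp [Metric.mem_ball_self hr]⟩) ?_
  intro y hy
  have := heq hy.2
  simpa [e.left_inv hy.1] using this

/-- The identity theorem for holomorphic functions on a connected complex 1-manifold. -/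
lemma aux_identity [ConnectedSpace M] {φ ψ : M → ℂ}
    (hφ : MDifferentiable 𝓘(ℂ, ℂ) 𝓘(ℂ, ℂ) φ) (hψ : MDifferentiable 𝓘(ℂ, ℂ) 𝓘(ℂ, ℂ) ψ)
    {x₀ : M} (hfr : ∃ᶠ y in 𝓝[≠] x₀, φ y = ψ y) : ∀ x, φ x = ψ x := by
  set E := {x : M | ∀ᶠ y in 𝓝 x, φ y = ψ y} with hE
  have hEopen : IsOpen E := isOpen_setOf_eventually_nhds
  have hEclosed : IsClosed E := by
    rw [← closure_subset_iff_isClosed]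
    intro x hx
    apply aux_loc hφ hψ x
    rw [Filter.frequently_iff]
    intro N hN
    obtain ⟨O, hOopen, hxO, hON⟩ := mem_nhdsWithin.mp hN
    obtain ⟨y, hyO, hyE⟩ := _root_.mem_closure_iff.mp hx O hOopen hxO
    set W := O ∩ interior {z | φ z = ψ z} with hW
    have hWopen : IsOpen W := hOopen.inter isOpen_interior
    have hyW : y ∈ W := ⟨hyO, by rwa [mem_interior_iff_mem_nhds]⟩
    by_cases hcase : ∃ z ∈ W, z ≠ x
    · obtain ⟨z, hzW, hzx⟩ := hcase
      have hz2 : z ∈ {z | φ z = ψ z} := interior_subset hzW.2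
      exact ⟨z, hON ⟨hzW.1, hzx⟩, hz2⟩
    · exfalso
      push_neg at hcase
      have hyx : y = x := hcase y hyW
      have hxW : x ∈ W := hyx ▸ hyW
      have hmem : (∅ : Set M) ∈ 𝓝[≠] x :=
        mem_nhdsWithin.mpr ⟨W, hWopen, hxW, fun z hz => absurd (hcase z hz.1) hz.2⟩
      exact (aux_neBot x).ne (empty_mem_iff_bot.mp hmem)
  have hx₀ : x₀ ∈ E := aux_loc hφ hψ x₀ hfr
  have huniv : E = univ := IsClopen.eq_univ ⟨hEclosed, hEopen⟩ ⟨x₀, hx₀⟩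
  intro x
  have : x ∈ E := huniv ▸ mem_univ x
  exact this.self_of_nhds

end AuxIdentity

section KeyLemma
open Filter Topology

lemma aux_key (U V : Set ℂ) (hU : IsOpen U) (hV : IsOpen V) (hVne : V.Nonempty)
    (f g : ℂ → ℂ) (hg : DifferentiableOn ℂ g V) (hgU : MapsTo g V U)
    (hfg : ∀ w ∈ V, f (g w) = w)
    (R : StandardContinuation U f) (S : StandardContinuation V g) (hS : S.IsMaximal) :
    ∃ h : R.S → S.S, (∀ x, S.p (h x) = R.F x) ∧ (∀ x, S.F (h x) = R.p x) := by
  obtain ⟨w₀, hw₀⟩ := hVne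
  -- two distinct points of V
  obtain ⟨r, hr, hball⟩ := Metric.isOpen_iff.mp hV w₀ hw₀
  have hw₁ : w₀ + ((r / 2 : ℝ) : ℂ) ∈ V := by
    apply hball
    simp only [Metric.mem_ball, dist_eq_norm, add_sub_cancel_left, Complex.norm_real,
      Real.norm_eq_abs]
    rw [abs_of_pos (by linarith)]
    linarith
  have hw₁ne : w₀ + ((r / 2 : ℝ) : ℂ) ≠ w₀ := by
    intro hcon
    have : ((r / 2 : ℝ) : ℂ) = 0 := by linear_combination hcon
    have : (r / 2 : ℝ) = 0 := by exact_mod_cast this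
    linarith
  -- the continuation of (V, g) built on R
  set Q : StandardContinuation V g :=
    { S := R.S
      p := R.F
      hp := R.hF
      hpnc := by
        rintro ⟨c, hc⟩
        have h1 : w₀ = c := by
          rw [← hfg w₀ hw₀, ← R.hFj _ (hgU hw₀), hc]
        have h2 : w₀ + ((r / 2 : ℝ) : ℂ) = c := by
          rw [← hfg _ hw₁, ← R.hFj _ (hgU hw₁), hc]
        exact hw₁ne (h2.trans h1.symm)
      hUrange := fun w hw => ⟨R.j (g w), by rw [R.hFj _ (hgU hw), hfg w hw]⟩
      j := fun w => R.j (g w)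
      hj := R.hj.comp hg.mdifferentiableOn (fun w hw => hgU hw)
      hpj := fun w hw => by
        show R.F (R.j (g w)) = w
        rw [R.hFj _ (hgU hw), hfg w hw]
      F := R.p
      hF := R.hp
      hFj := fun w hw => R.hpj _ (hgU hw) } with hQ
  obtain ⟨h, hhdiff, hhj⟩ := hS Q
  have hhj' : ∀ w ∈ V, h (R.j (g w)) = S.j w := hhj
  -- the base point and the tendsto statement
  have hgw₀U : g w₀ ∈ U := hgU hw₀
  have hcontg : ContinuousAt g w₀ := hg.continuousOn.continuousAt (hV.mem_nhds hw₀)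
  have hcontj : ContinuousAt R.j (g w₀) :=
    (R.hj.continuousOn).continuousAt (hU.mem_nhds hgw₀U)
  have hmemV : ∀ᶠ w in 𝓝[≠] w₀, w ∈ V :=
    eventually_nhdsWithin_of_eventually_nhds (hV.eventually_mem hw₀)
  have hinj : ∀ w ∈ V, w ≠ w₀ → R.j (g w) ≠ R.j (g w₀) := by
    intro w hw hne hcon
    apply hne
    have : g w = g w₀ := by
      rw [← R.hpj _ (hgU hw), ← R.hpj _ (hgU hw₀), hcon]
    rw [← hfg w hw, ← hfg w₀ hw₀, this]
  have htend : Tendsto (fun w => R.j (g w)) (𝓝[≠] w₀) (𝓝[≠] (R.j (g w₀))) := by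
    rw [tendsto_nhdsWithin_iff]
    constructor
    · exact (hcontj.comp hcontg).continuousWithinAt
    · filter_upwards [hmemV, eventually_mem_nhdsWithin] with w hwV hwne
      exact hinj w hwV hwne
  refine ⟨h, ?_, ?_⟩
  · apply aux_identity (M := R.S) (S.hp.comp hhdiff) R.hF (x₀ := R.j (g w₀))
    apply htend.frequently
    have hev : ∀ᶠ w in 𝓝[≠] w₀, S.p (h (R.j (g w))) = R.F (R.j (g w)) := by
      filter_upwards [hmemV] with w hw
      rw [hhj' w hw, S.hpj w hw, R.hFj _ (hgU hw), hfg w hw]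
    exact hev.frequently
  · apply aux_identity (M := R.S) (S.hF.comp hhdiff) R.hp (x₀ := R.j (g w₀))
    apply htend.frequently
    have hev : ∀ᶠ w in 𝓝[≠] w₀, S.F (h (R.j (g w))) = R.p (R.j (g w)) := by
      filter_upwards [hmemV] with w hw
      rw [hhj' w hw, S.hFj w hw, R.hpj _ (hgU hw)]
    exact hev.frequently

end KeyLemma

/-- **The values of the continuation of `f` coincide with the projections of the Riemann
surface of its inverse (Lemma `inverse`).**  Let `f : U → V` and `g : V → U` be mutually
inverse holomorphic bijections between nonempty connected open subsets of `ℂ`, let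
`(R, π, j, F)` be a standard Riemann surface of `(U, f)` and `(S, ρ, ℓ, G)` a standard
Riemann surface of `(V, g)`.  Then `F(R) = ρ(S)`. -/
theorem stmt_17 (U V : Set ℂ) (hU : IsOpen U) (hUne : U.Nonempty) (hUconn : IsConnected U)
    (hV : IsOpen V) (hVne : V.Nonempty) (hVconn : IsConnected V)
    (f g : ℂ → ℂ)
    (hf : DifferentiableOn ℂ f U) (hg : DifferentiableOn ℂ g V)
    (hfV : MapsTo f U V) (hgU : MapsTo g V U)
    (hgf : ∀ z ∈ U, g (f z) = z) (hfg : ∀ w ∈ V, f (g w) = w)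
    (R : StandardContinuation U f) (hR : R.IsMaximal)
    (S : StandardContinuation V g) (hS : S.IsMaximal) :
    Set.range R.F = Set.range S.p := by
  apply Set.Subset.antisymm
  · obtain ⟨h, h1, -⟩ := aux_key U V hU hV hVne f g hg hgU hfg R S hS
    rintro _ ⟨x, rfl⟩
    exact ⟨h x, h1 x⟩
  · obtain ⟨h, -, h2⟩ := aux_key V U hV hU hUne g f hf hfV hgf S R hR
    rintro _ ⟨x, rfl⟩
    exact ⟨h x, h2 x⟩
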